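/- For each index i, if deg D_{e_i} > 0 then α divides e_i. -/

import Mathlib

/-- For each index `i`, if `deg D_{e i} > 0` then `α` divides `e i`. -/
theorem brieskorn_alpha_dvd_e
    (m : ℕ) (hm : 3 ≤ m) (a : Fin m → ℕ)
    (ha : ∀ i, 2 ≤ a i) (hmono : Monotone a)
    (ℓ : ℕ) (hℓ : ℓ = Finset.univ.lcm a)
    (ℓi : Fin m → ℕ) (hℓi : ∀ i, ℓi i = (Finset.univ.erase i).lcm a)
    (α : Fin m → ℕ) (hα : ∀ i, α i = ℓ / ℓi i)
    (αp : ℕ) (hαp : αp = ∏ i, α i)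
    (e : Fin m → ℕ) (he : ∀ i, e i = ℓ / a i)
    (g : ℕ) (hg : g = (∏ i, a i) / ℓ)
    (gi : Fin m → ℕ) (hgi : ∀ i, gi i = g * α i / a i)
    (β : Fin m → ℕ) (hβ : ∀ i, β i < α i) (hβ' : ∀ i, α i ∣ e i * β i + 1)
    (c₀ : ℤ) (hc₀pos : 0 < c₀)
    (hc₀ : (c₀ : ℚ) = (∑ i, (gi i : ℚ) * (β i : ℚ) / (α i : ℚ))
        + (∏ i, (a i : ℚ)) / (ℓ : ℚ) ^ 2)
    (degD : ℕ → ℤ)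
    (hdegD : ∀ n : ℕ, degD n
        = (n : ℤ) * c₀ - ∑ i, (gi i : ℤ) * ⌈((n : ℚ) * (β i : ℚ)) / (α i : ℚ)⌉)
    :
    ∀ i : Fin m, 0 < degD (e i) → αp ∣ e i := by
  -- basic positivity and divisibility facts
  have hapos : ∀ j, 0 < a j := fun j => lt_of_lt_of_le two_pos (ha j)
  have hadvdℓ : ∀ j, a j ∣ ℓ := fun j => by
    rw [hℓ]; exact Finset.dvd_lcm (Finset.mem_univ j)
  have hℓpos : 0 < ℓ := by
    refine Nat.pos_of_ne_zero fun h0 => ?_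
    rw [hℓ] at h0
    rcases Finset.lcm_eq_zero_iff.mp h0 with ⟨j, _, hj⟩
    exact (hapos j).ne' hj
  have hℓidvd : ∀ j, ℓi j ∣ ℓ := fun j => by
    rw [hℓi, hℓ]
    exact Finset.lcm_dvd fun k _ => Finset.dvd_lcm (Finset.mem_univ k)
  have hℓipos : ∀ j, 0 < ℓi j := fun j => by
    rcases Nat.eq_zero_or_pos (ℓi j) with h0 | h0
    · exfalso; have := hℓidvd j; rw [h0] at this
      exact Nat.lt_irrefl 0 (by simpa [Nat.zero_dvd.mp this] using hℓpos)
    · exact h0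
  have hℓsplit : ∀ j, ℓ = ℓi j * α j := fun j => by
    rw [hα]; exact (Nat.mul_div_cancel' (hℓidvd j)).symm
  have hαpos : ∀ j, 0 < α j := fun j => by
    rcases Nat.eq_zero_or_pos (α j) with h0 | h0
    · exfalso; have := hℓsplit j; rw [h0, Nat.mul_zero] at this; omega
    · exact h0
  have hle : ∀ j, ℓ = a j * e j := fun j => by
    rw [he]; exact (Nat.mul_div_cancel' (hadvdℓ j)).symm
  have haidvdℓi : ∀ k j : Fin m, k ≠ j → a k ∣ ℓi j := fun k j h => by
    rw [hℓi]; exact Finset.dvd_lcm (Finset.mem_erase.mpr ⟨h, Finset.mem_univ k⟩)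
  have hαdvde : ∀ j k : Fin m, j ≠ k → α j ∣ e k := by
    intro j k hjk
    obtain ⟨u, hu⟩ := haidvdℓi k j hjk.symm
    have h1 : ℓ = a k * (u * α j) := by
      rw [hℓsplit j, hu]; ring
    have h2 : e k = u * α j := by
      rw [he, h1, Nat.mul_div_cancel_left _ (hapos k)]
    rw [h2]; exact dvd_mul_left (α j) u
  have hcop : ∀ j, Nat.Coprime (α j) (e j) := by
    intro j
    have hd1 : Nat.gcd (α j) (e j) ∣ e j * β j + 1 :=
      dvd_trans (Nat.gcd_dvd_left _ _) (hβ' j)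
    have hd2 : Nat.gcd (α j) (e j) ∣ e j * β j :=
      Dvd.dvd.mul_right (Nat.gcd_dvd_right _ _) _
    have h1 : Nat.gcd (α j) (e j) ∣ 1 := by
      have := Nat.dvd_sub hd1 hd2; simpa using this
    exact Nat.dvd_one.mp h1
  have hℓdvdprod : ℓ ∣ ∏ j, a j := by
    rw [hℓ]; exact Finset.lcm_dvd fun j _ => Finset.dvd_prod_of_mem a (Finset.mem_univ j)
  have hprodsplit : (∏ j, a j) = ℓ * g := by
    rw [hg]; exact (Nat.mul_div_cancel' hℓdvdprod).symm
  intro i hpos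
  by_cases hai : α i = 1
  · -- divisibility case
    have hdvdall : ∀ j : Fin m, ((α j : ℤ)) ∣ (e i : ℤ) := by
      intro j
      by_cases hji : j = i
      · rw [hji, hai]; exact one_dvd _
      · exact_mod_cast Int.natCast_dvd_natCast.mpr (hαdvde j i hji)
    have hpair : Set.Pairwise ((Finset.univ : Finset (Fin m)) : Set (Fin m))
        (Function.onFun IsCoprime fun j => ((α j : ℤ))) := by
      intro j _ k _ hjk
      refine Nat.isCoprime_iff_coprime.mpr ?_
      exact ((hcop k).coprime_dvd_right (hαdvde j k hjk)).symm
    have := Finset.prod_dvd_of_coprime hpair (fun j _ => hdvdall j)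
    have h2 : ((αp : ℤ)) ∣ (e i : ℤ) := by
      rw [hαp]; push_cast; exact this
    exact_mod_cast h2
  · -- show degD (e i) = 0, contradiction
    exfalso
    have hα2 : 2 ≤ α i := by have := hαpos i; omega
    obtain ⟨s, hs⟩ := hβ' i
    -- witness for gi i
    obtain ⟨v, hv⟩ : ℓi i ∣ ∏ j ∈ Finset.univ.erase i, a j := by
      rw [hℓi]; exact Finset.lcm_dvd fun j hj => Finset.dvd_prod_of_mem a hj
    have hP : (∏ j, a j) = a i * (ℓi i * v) := by
      rw [← Finset.mul_prod_erase _ a (Finset.mem_univ i), hv]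
    have key : ℓi i * (α i * g) = ℓi i * (a i * v) := by
      calc ℓi i * (α i * g) = ℓi i * α i * g := (mul_assoc _ _ _).symm
        _ = ℓ * g := by rw [← hℓsplit i]
        _ = ∏ j, a j := hprodsplit.symm
        _ = a i * (ℓi i * v) := hP
        _ = ℓi i * (a i * v) := by ring
    have key2 : α i * g = a i * v := Nat.eq_of_mul_eq_mul_left (hℓipos i) key
    have hgiieq : gi i = v := by
      rw [hgi, show g * α i = a i * v by rw [← key2]; ring,
        Nat.mul_div_cancel_left v (hapos i)]
    have hgii : g * α i = a i * gi i := by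
      rw [hgiieq, ← key2]; ring
    -- ceiling computations
    have hceil : ∀ j ∈ Finset.univ.erase i,
        ((⌈((e i : ℚ) * (β j : ℚ)) / (α j : ℚ)⌉ : ℤ) : ℚ)
          = (e i : ℚ) * (β j : ℚ) / (α j : ℚ) := by
      intro j hj
      have hji : j ≠ i := (Finset.mem_erase.mp hj).1
      obtain ⟨t, ht⟩ := hαdvde j i hji
      have hαj : (α j : ℚ) ≠ 0 := by exact_mod_cast (hαpos j).ne'
      have hval : ((e i : ℚ) * (β j : ℚ)) / (α j : ℚ) = ((t * β j : ℤ) : ℚ) := by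
        have htQ : (e i : ℚ) = (α j : ℚ) * (t : ℚ) := by exact_mod_cast ht
        push_cast
        rw [htQ]; field_simp
      rw [hval, Int.ceil_intCast]
    have hceili : ⌈((e i : ℚ) * (β i : ℚ)) / (α i : ℚ)⌉ = (s : ℤ) := by
      have hαi : (α i : ℚ) ≠ 0 := by exact_mod_cast (hαpos i).ne'
      have hsQ : (e i : ℚ) * (β i : ℚ) + 1 = (α i : ℚ) * (s : ℚ) := by
        exact_mod_cast hs
      have hx : ((e i : ℚ) * (β i : ℚ)) / (α i : ℚ) = (s : ℚ) - 1 / (α i : ℚ) := by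
        field_simp
        linarith [hsQ]
      rw [hx, Int.ceil_eq_iff]
      have h1 : (0 : ℚ) < 1 / (α i : ℚ) := by positivity
      have h2 : 1 / (α i : ℚ) < 1 := by
        rw [div_lt_one (by positivity)]
        exact_mod_cast hα2
      constructor
      · push_cast; linarith
      · push_cast; linarith
    -- main computation in ℚ
    have hQ : (degD (e i) : ℚ) = 0 := by
      have h0 := hdegD (e i)
      have hcast : (degD (e i) : ℚ)
          = (e i : ℚ) * (c₀ : ℚ)
            - ∑ j, (gi j : ℚ) * ((⌈((e i : ℚ) * (β j : ℚ)) / (α j : ℚ)⌉ : ℤ) : ℚ) := by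
        rw [h0]; push_cast; ring
      rw [hcast, hc₀]
      rw [← Finset.add_sum_erase _ (fun j => (gi j : ℚ) * (β j : ℚ) / (α j : ℚ))
          (Finset.mem_univ i),
        ← Finset.add_sum_erase _
          (fun j => (gi j : ℚ) * ((⌈((e i : ℚ) * (β j : ℚ)) / (α j : ℚ)⌉ : ℤ) : ℚ))
          (Finset.mem_univ i)]
      have hsc : ∑ j ∈ Finset.univ.erase i,
            (gi j : ℚ) * ((⌈((e i : ℚ) * (β j : ℚ)) / (α j : ℚ)⌉ : ℤ) : ℚ)
          = ∑ j ∈ Finset.univ.erase i, (gi j : ℚ) * ((e i : ℚ) * (β j : ℚ) / (α j : ℚ)) :=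
        Finset.sum_congr rfl fun j hj => by rw [hceil j hj]
      rw [hsc, hceili]
      have hsumeq : ∑ j ∈ Finset.univ.erase i, (gi j : ℚ) * ((e i : ℚ) * (β j : ℚ) / (α j : ℚ))
          = (e i : ℚ) * ∑ j ∈ Finset.univ.erase i, (gi j : ℚ) * (β j : ℚ) / (α j : ℚ) := by
        rw [Finset.mul_sum]
        exact Finset.sum_congr rfl fun j hj => by ring
      rw [hsumeq]
      -- now a pure field identity
      have hαi : (α i : ℚ) ≠ 0 := by exact_mod_cast (hαpos i).ne'
      have hℓQ : (ℓ : ℚ) ≠ 0 := by exact_mod_cast hℓpos.ne'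
      have hsQ : (e i : ℚ) * (β i : ℚ) + 1 = (α i : ℚ) * (s : ℚ) := by exact_mod_cast hs
      have hgiQ : (g : ℚ) * (α i : ℚ) = (a i : ℚ) * (gi i : ℚ) := by exact_mod_cast hgii
      have hprodQ : (∏ j, (a j : ℚ)) = (ℓ : ℚ) * (g : ℚ) := by
        rw [← Nat.cast_prod]; exact_mod_cast hprodsplit
      have hleQ : (ℓ : ℚ) = (a i : ℚ) * (e i : ℚ) := by exact_mod_cast hle i
      rw [hprodQ]
      set S := ∑ j ∈ Finset.univ.erase i, (gi j : ℚ) * (β j : ℚ) / (α j : ℚ) with hS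
      field_simp
      have hss : (((s : ℤ) : ℚ)) = (s : ℚ) := Int.cast_natCast s
      linear_combination ((gi i : ℚ) * (ℓ : ℚ)) * hsQ + (e i : ℚ) * hgiQ
        + (-(gi i : ℚ)) * hleQ + (-(gi i : ℚ) * (α i : ℚ) * (ℓ : ℚ)) * hss
    have : degD (e i) = 0 := by exact_mod_cast hQ
    omega
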